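/- Assume conj(B) = B − 2πiH for a symmetric g×g integer matrix H. Let V_a, W_a, V_b, W_b ∈ ℂ^g satisfy conj(V_a) = −V_b and conj(W_a) = −W_b. Let r ∈ ℂ^g and N ∈ ℤ^g satisfy conj(r) = r − 2πiN. Let κ₁ ∈ ℂ∖{0}, κ₂ = conj(κ₁), h ∈ ℝ, and K₁(a,b), K₂(a,b), K₁(b,a), K₂(b,a) ∈ ℂ with conj(K₁(a,b)) = K₁(b,a) and conj(K₂(a,b)) = K₂(b,a). Let q₂ ∈ ℝ∖{0}. Let d ∈ ℂ^g and T, L ∈ ℤ^g satisfy conj(d) = −d − iπ·diag(H) + 2πiT + BL (so that d = (1/2)Re(B)L + i·d_I for some d_I ∈ ℝ^g and 2T + HL = diag(H)). Put ρ = −sign(q₂)·exp(−iπ⟨N,L⟩) (which equals ±1), |A| = |κ₁|·|q₂|^{1/2}·exp(−(1/2)⟨Re(r), L⟩), and A = |A|e^{iθ} for some θ ∈ ℝ. Define Z(ξ,η,t) = i(κ₁V_aξ − κ₂V_bη + (κ₁²W_a − κ₂²W_b)t/2), G₁ = κ₁K₁(a,b), G₂ = κ₂K₁(b,a), G₃ =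 κ₁²K₂(a,b) + κ₂²K₂(b,a) + h, ψ = A·Θ(Z−d+r)/Θ(Z−d)·exp(i(−G₁ξ − G₂η + G₃t/2)), ψ* = −(κ₁κ₂q₂/A)·Θ(Z−d−r)/Θ(Z−d)·exp(i(G₁ξ + G₂η − G₃t/2)). Then for every ξ ∈ ℂ, η = conj(ξ) and t ∈ ℝ with Θ(Z(ξ,η,t)−d) ≠ 0, the DS2 reality condition holds: ψ*(ξ,η,t) = ρ·conj(ψ(ξ,η,t)). -/

import Mathlib

open Complex ComplexConjugate

noncomputable section

/-- Bilinear pairing ⟨u,v⟩ = Σ uᵢ vᵢ (no complex conjugation). -/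
def pairC {g : ℕ} (u v : Fin g → ℂ) : ℂ := ∑ i, u i * v i

/-- The Riemann theta function with period matrix `B`. -/
def theta {g : ℕ} (B : Matrix (Fin g) (Fin g) ℂ) (z : Fin g → ℂ) : ℂ :=
  ∑' m : Fin g → ℤ,
    Complex.exp ((1 / 2) * pairC (B.mulVec (fun i => (m i : ℂ))) (fun i => (m i : ℂ))
      + pairC (fun i => (m i : ℂ)) z)

namespace Stmt14Aux

variable {g : ℕ}

lemma pairC_comm (u v : Fin g → ℂ) : pairC u v = pairC v u :=
  Finset.sum_congr rfl fun i _ => mul_comm _ _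

lemma pairC_add_left (u v w : Fin g → ℂ) : pairC (u + v) w = pairC u w + pairC v w := by
  simp [pairC, add_mul, Finset.sum_add_distrib]

lemma pairC_add_right (u v w : Fin g → ℂ) : pairC u (v + w) = pairC u v + pairC u w := by
  simp [pairC, mul_add, Finset.sum_add_distrib]

lemma pairC_neg_left (u v : Fin g → ℂ) : pairC (-u) v = -pairC u v := by
  simp [pairC]

lemma pairC_neg_right (u v : Fin g → ℂ) : pairC u (-v) = -pairC u v := by
  simp [pairC]

lemma pairC_sub_right (u v w : Fin g → ℂ) : pairC u (v - w) = pairC u v - pairC u w := by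
  simp [pairC, mul_sub, Finset.sum_sub_distrib]

lemma pairC_mulVec (B : Matrix (Fin g) (Fin g) ℂ) (u v : Fin g → ℂ) :
    pairC (B.mulVec u) v = ∑ i, ∑ j, B i j * u j * v i := by
  simp [pairC, Matrix.mulVec, dotProduct, Finset.sum_mul]

lemma pairC_mulVec_symm {B : Matrix (Fin g) (Fin g) ℂ} (hB : B.IsSymm)
    (u v : Fin g → ℂ) : pairC (B.mulVec u) v = pairC (B.mulVec v) u := by
  rw [pairC_mulVec, pairC_mulVec, Finset.sum_comm]
  refine Finset.sum_congr rfl fun a _ => Finset.sum_congr rfl fun b _ => ?_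
  rw [hB.apply a b]
  ring

lemma theta_neg (B : Matrix (Fin g) (Fin g) ℂ) (z : Fin g → ℂ) :
    theta B (-z) = theta B z := by
  rw [theta, theta]
  conv_rhs => rw [← Equiv.tsum_eq (Equiv.neg (Fin g → ℤ))]
  refine tsum_congr fun m => ?_
  have h1 : (fun i => ((((Equiv.neg (Fin g → ℤ)) m) i : ℤ) : ℂ)) = -(fun i => ((m i : ℤ) : ℂ)) := by
    funext i; simp
  simp only [h1, Matrix.mulVec_neg, pairC_neg_left, pairC_neg_right, neg_neg]

lemma theta_int_shift (B : Matrix (Fin g) (Fin g) ℂ) (z : Fin g → ℂ) (k : Fin g → ℤ) :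
    theta B (z + fun i => 2 * (Real.pi : ℂ) * I * (k i : ℂ)) = theta B z := by
  rw [theta, theta]
  refine tsum_congr fun m => ?_
  rw [pairC_add_right]
  have h1 : pairC (fun i => ((m i : ℤ) : ℂ)) (fun i => 2 * (Real.pi : ℂ) * I * (k i : ℂ))
      = ((∑ i, m i * k i : ℤ) : ℂ) * (2 * (Real.pi : ℂ) * I) := by
    simp only [pairC]
    push_cast
    rw [Finset.sum_mul]
    exact Finset.sum_congr rfl fun i _ => by ring
  rw [h1, show (1 / 2) * pairC (B.mulVec (fun i => ((m i : ℤ) : ℂ))) (fun i => ((m i : ℤ) : ℂ))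
      + (pairC (fun i => ((m i : ℤ) : ℂ)) z + ((∑ i, m i * k i : ℤ) : ℂ) * (2 * (Real.pi : ℂ) * I))
      = ((1 / 2) * pairC (B.mulVec (fun i => ((m i : ℤ) : ℂ))) (fun i => ((m i : ℤ) : ℂ))
        + pairC (fun i => ((m i : ℤ) : ℂ)) z) + ((∑ i, m i * k i : ℤ) : ℂ) * (2 * (Real.pi : ℂ) * I)
      from by ring,
    Complex.exp_add, Complex.exp_int_mul_two_pi_mul_I, mul_one]

lemma theta_quasi {B : Matrix (Fin g) (Fin g) ℂ} (hB : B.IsSymm) (z : Fin g → ℂ) (L : Fin g → ℤ) :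
    theta B (z + B.mulVec (fun i => ((L i : ℤ) : ℂ)))
      = Complex.exp (-(1 / 2) * pairC (B.mulVec (fun i => ((L i : ℤ) : ℂ))) (fun i => ((L i : ℤ) : ℂ))
          - pairC (fun i => ((L i : ℤ) : ℂ)) z) * theta B z := by
  rw [theta, theta, ← tsum_mul_left]
  conv_rhs => rw [← Equiv.tsum_eq (Equiv.addRight L)]
  refine tsum_congr fun m => ?_
  have hmL : (fun i => ((((Equiv.addRight L) m) i : ℤ) : ℂ))
      = (fun i => ((m i : ℤ) : ℂ)) + (fun i => ((L i : ℤ) : ℂ)) := by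
    funext i; simp [Equiv.addRight]
  rw [hmL, ← Complex.exp_add]
  congr 1
  have hsym1 : pairC (B.mulVec (fun i => ((L i : ℤ) : ℂ))) (fun i => ((m i : ℤ) : ℂ))
      = pairC (B.mulVec (fun i => ((m i : ℤ) : ℂ))) (fun i => ((L i : ℤ) : ℂ)) :=
    pairC_mulVec_symm hB _ _
  have hsym2 : pairC (fun i => ((m i : ℤ) : ℂ)) (B.mulVec (fun i => ((L i : ℤ) : ℂ)))
      = pairC (B.mulVec (fun i => ((m i : ℤ) : ℂ))) (fun i => ((L i : ℤ) : ℂ)) := by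
    rw [pairC_comm]; exact hsym1
  simp only [Matrix.mulVec_add, pairC_add_left, pairC_add_right]
  rw [hsym1, hsym2]
  ring

lemma zmod2_sym_sum {n : ℕ} (a : Fin n → Fin n → ZMod 2) (hsym : ∀ i j, a i j = a j i) :
    (∑ i, ∑ j, a i j) = ∑ i, a i i := by
  have hadd : ∀ x : ZMod 2, x + x = 0 := by decide
  rw [← Finset.sum_product' Finset.univ Finset.univ a]
  rw [← Finset.sum_filter_add_sum_filter_not (Finset.univ ×ˢ Finset.univ)
    (fun p : Fin n × Fin n => p.1 = p.2)]
  have h2 : (∑ p ∈ (Finset.univ ×ˢ Finset.univ).filter (fun p : Fin n × Fin n => ¬ p.1 = p.2),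
      a p.1 p.2) = 0 := by
    refine Finset.sum_involution (fun p _ => (p.2, p.1)) ?_ ?_ ?_ ?_
    · intro p _
      rw [hsym p.1 p.2]; exact hadd _
    · intro p hp _
      simp only [Finset.mem_filter] at hp
      intro hcon
      exact hp.2 (congrArg Prod.snd hcon)
    · intro p hp
      simp only [Finset.mem_filter, Finset.mem_product, Finset.mem_univ, and_self, true_and]
        at hp ⊢
      exact fun hc => hp hc.symm
    · intro p _; rfl
  have h1 : (∑ p ∈ (Finset.univ ×ˢ Finset.univ).filter (fun p : Fin n × Fin n => p.1 = p.2),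
      a p.1 p.2) = ∑ i, a i i := by
    rw [Finset.sum_filter, Finset.sum_product]
    simp
  rw [h1, h2, add_zero]

lemma even_sym_quad (H : Matrix (Fin g) (Fin g) ℤ) (hH : H.IsSymm) (m : Fin g → ℤ) :
    Even ((∑ i, ∑ j, H i j * m j * m i) - ∑ i, H i i * m i) := by
  have key : ∀ x : ZMod 2, x * x = x := by decide
  have hdvd : ((2 : ℕ) : ℤ) ∣ ((∑ i, ∑ j, H i j * m j * m i) - ∑ i, H i i * m i) := by
    rw [← ZMod.intCast_zmod_eq_zero_iff_dvd]
    push_cast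
    rw [sub_eq_zero]
    have hsym' : ∀ i j : Fin g, ((H i j : ZMod 2) * ((m j : ℤ) : ZMod 2) * ((m i : ℤ) : ZMod 2))
        = ((H j i : ZMod 2) * ((m i : ℤ) : ZMod 2) * ((m j : ℤ) : ZMod 2)) := by
      intro i j; rw [hH.apply j i]; ring
    calc (∑ i, ∑ j, ((H i j : ZMod 2) * ((m j : ℤ) : ZMod 2) * ((m i : ℤ) : ZMod 2)))
        = ∑ i, ((H i i : ZMod 2) * ((m i : ℤ) : ZMod 2) * ((m i : ℤ) : ZMod 2)) :=
          zmod2_sym_sum _ hsym'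
      _ = ∑ i, ((H i i : ZMod 2) * ((m i : ℤ) : ZMod 2)) :=
          Finset.sum_congr rfl fun i _ => by rw [mul_assoc, key]
  obtain ⟨k, hk⟩ := hdvd
  exact ⟨k, by omega⟩

lemma theta_conj {B : Matrix (Fin g) (Fin g) ℂ} {H : Matrix (Fin g) (Fin g) ℤ}
    (hH : H.IsSymm)
    (hBH : ∀ i j, conj (B i j) = B i j - 2 * (Real.pi : ℂ) * I * (H i j : ℂ))
    (z : Fin g → ℂ) :
    conj (theta B z) = theta B (fun i => conj (z i) - (Real.pi : ℂ) * I * (H i i : ℂ)) := by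
  rw [theta, theta, starRingEnd_apply, tsum_star]
  refine tsum_congr fun m => ?_
  rw [← starRingEnd_apply, ← Complex.exp_conj]
  obtain ⟨c, hc⟩ := even_sym_quad H hH m
  have h2 : conj (pairC (B.mulVec (fun i => ((m i : ℤ) : ℂ))) (fun i => ((m i : ℤ) : ℂ)))
      = pairC (B.mulVec (fun i => ((m i : ℤ) : ℂ))) (fun i => ((m i : ℤ) : ℂ))
        - 2 * (Real.pi : ℂ) * I * ((∑ i, ∑ j, H i j * m j * m i : ℤ) : ℂ) := by
    rw [pairC_mulVec, map_sum]
    push_cast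
    rw [Finset.mul_sum, ← Finset.sum_sub_distrib]
    refine Finset.sum_congr rfl fun i _ => ?_
    rw [map_sum, Finset.mul_sum, ← Finset.sum_sub_distrib]
    refine Finset.sum_congr rfl fun j _ => ?_
    rw [map_mul, map_mul, map_intCast, map_intCast, hBH i j]
    ring
  have h3 : conj (pairC (fun i => ((m i : ℤ) : ℂ)) z) = ∑ i, ((m i : ℤ) : ℂ) * conj (z i) := by
    simp only [pairC, map_sum, map_mul, map_intCast]
  have hD : pairC (fun i => ((m i : ℤ) : ℂ))
        (fun i => conj (z i) - (Real.pi : ℂ) * I * (H i i : ℂ))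
      = (∑ i, ((m i : ℤ) : ℂ) * conj (z i))
        - (Real.pi : ℂ) * I * ((∑ i, H i i * m i : ℤ) : ℂ) := by
    simp only [pairC]
    push_cast
    rw [Finset.mul_sum, ← Finset.sum_sub_distrib]
    exact Finset.sum_congr rfl fun i _ => by ring
  have hcast : (∑ i, ∑ j, ((H i j : ℂ) * ((m j : ℤ) : ℂ) * ((m i : ℤ) : ℂ)))
      - (∑ i, ((H i i : ℂ) * ((m i : ℤ) : ℂ))) = (c : ℂ) + (c : ℂ) := by
    exact_mod_cast congrArg (fun n : ℤ => (n : ℂ)) hc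
  have hexp : conj ((1 / 2) * pairC (B.mulVec (fun i => ((m i : ℤ) : ℂ))) (fun i => ((m i : ℤ) : ℂ))
        + pairC (fun i => ((m i : ℤ) : ℂ)) z)
      = ((1 / 2) * pairC (B.mulVec (fun i => ((m i : ℤ) : ℂ))) (fun i => ((m i : ℤ) : ℂ))
        + pairC (fun i => ((m i : ℤ) : ℂ))
          (fun i => conj (z i) - (Real.pi : ℂ) * I * (H i i : ℂ)))
        + ((-c : ℤ) : ℂ) * (2 * (Real.pi : ℂ) * I) := by
    rw [map_add, map_mul, h2, h3, hD]
    have h12 : conj ((1 : ℂ) / 2) = 1 / 2 := by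
      rw [map_div₀, map_one, map_ofNat]
    rw [h12]
    push_cast
    linear_combination (-(Real.pi : ℂ) * I) * hcast
  rw [hexp, Complex.exp_add, Complex.exp_int_mul_two_pi_mul_I, mul_one]

end Stmt14Aux
/-- reality condition `ψ* = ρ conj(ψ)` (with `ρ = ±1`) for the
theta-functional solutions of the DS2 equation, on `η = conj(ξ)`, `t ∈ ℝ`. -/
theorem stmt_14 {g : ℕ} (hg : 1 ≤ g) (B : Matrix (Fin g) (Fin g) ℂ)
    (hBsymm : B.IsSymm)
    (hBneg : ∀ x : Fin g → ℝ, x ≠ 0 → ∑ i, ∑ j, (B i j).re * x i * x j < 0)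
    (H : Matrix (Fin g) (Fin g) ℤ) (hHsymm : H.IsSymm)
    (hBH : ∀ i j, conj (B i j) = B i j - 2 * (Real.pi : ℂ) * I * (H i j : ℂ))
    (Va Wa Vb Wb : Fin g → ℂ)
    (hVab : ∀ i, conj (Va i) = -Vb i) (hWab : ∀ i, conj (Wa i) = -Wb i)
    (r : Fin g → ℂ) (N : Fin g → ℤ)
    (hr : ∀ i, conj (r i) = r i - 2 * (Real.pi : ℂ) * I * (N i : ℂ))
    (κ₁ κ₂ : ℂ) (hκ₁ : κ₁ ≠ 0) (hκ₂ : κ₂ = conj κ₁) (h : ℝ)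
    (K1ab K2ab K1ba K2ba : ℂ)
    (hK1 : conj K1ab = K1ba) (hK2 : conj K2ab = K2ba)
    (q₂ : ℝ) (hq₂ : q₂ ≠ 0)
    (d : Fin g → ℂ) (T L : Fin g → ℤ)
    (hd : ∀ i, conj (d i)
      = -d i - (Real.pi : ℂ) * I * (H i i : ℂ) + 2 * (Real.pi : ℂ) * I * (T i : ℂ)
        + B.mulVec (fun j => (L j : ℂ)) i)
    (ρ : ℂ)
    (hρ : ρ = -(((q₂ / |q₂| : ℝ)) : ℂ) *
      Complex.exp (-((Real.pi : ℂ) * I) * ((∑ i, N i * L i : ℤ) : ℂ)))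
    (Aabs : ℝ)
    (hAabs : Aabs = ‖κ₁‖ * Real.sqrt |q₂| *
      Real.exp (-(1 / 2) * ∑ i, (r i).re * (L i : ℝ)))
    (θ : ℝ) (A : ℂ) (hA : A = (Aabs : ℂ) * Complex.exp (I * (θ : ℂ)))
    (Z : ℂ → ℂ → ℝ → Fin g → ℂ)
    (hZ : ∀ (ξ η : ℂ) (t : ℝ), Z ξ η t = fun i =>
      I * (κ₁ * Va i * ξ - κ₂ * Vb i * η
        + (κ₁ ^ 2 * Wa i - κ₂ ^ 2 * Wb i) * (t : ℂ) / 2))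
    (G₁ G₂ G₃ : ℂ) (hG₁ : G₁ = κ₁ * K1ab) (hG₂ : G₂ = κ₂ * K1ba)
    (hG₃ : G₃ = κ₁ ^ 2 * K2ab + κ₂ ^ 2 * K2ba + (h : ℂ))
    (ψ ψs : ℂ → ℂ → ℝ → ℂ)
    (hψ : ∀ (ξ η : ℂ) (t : ℝ), ψ ξ η t =
      A * theta B (Z ξ η t - d + r) / theta B (Z ξ η t - d) *
        Complex.exp (I * (-(G₁ * ξ) - G₂ * η + G₃ * (t : ℂ) / 2)))
    (hψs : ∀ (ξ η : ℂ) (t : ℝ), ψs ξ η t =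
      -(κ₁ * κ₂ * (q₂ : ℂ) / A) * theta B (Z ξ η t - d - r) / theta B (Z ξ η t - d) *
        Complex.exp (I * (G₁ * ξ + G₂ * η - G₃ * (t : ℂ) / 2))) :
    (ρ = 1 ∨ ρ = -1) ∧
    (∀ (ξ : ℂ) (t : ℝ), theta B (Z ξ (conj ξ) t - d) ≠ 0 →
      ψs ξ (conj ξ) t = ρ * conj (ψ ξ (conj ξ) t)) := by
  have hcκ₁ : conj κ₁ = κ₂ := hκ₂.symm
  have hcκ₂ : conj κ₂ = κ₁ := by rw [hκ₂, Complex.conj_conj]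
  constructor
  · -- ρ = ±1
    have h1 : ((q₂ / |q₂| : ℝ) : ℂ) * ((q₂ / |q₂| : ℝ) : ℂ) = 1 := by
      rw [← Complex.ofReal_mul]
      norm_cast
      rw [div_mul_div_comm, abs_mul_abs_self, div_self (mul_ne_zero hq₂ hq₂)]
    have h2 : Complex.exp (-((Real.pi : ℂ) * I) * ((∑ i, N i * L i : ℤ) : ℂ))
        * Complex.exp (-((Real.pi : ℂ) * I) * ((∑ i, N i * L i : ℤ) : ℂ)) = 1 := by
      rw [← Complex.exp_add,
        show -((Real.pi : ℂ) * I) * ((∑ i, N i * L i : ℤ) : ℂ)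
            + -((Real.pi : ℂ) * I) * ((∑ i, N i * L i : ℤ) : ℂ)
          = ((-(∑ i, N i * L i) : ℤ) : ℂ) * (2 * (Real.pi : ℂ) * I) from by push_cast; ring,
        Complex.exp_int_mul_two_pi_mul_I]
    rw [← mul_self_eq_one_iff, hρ, neg_mul, neg_mul_neg, mul_mul_mul_comm, h1, h2, one_mul]
  · intro ξ t hθ0
    have hcVb : ∀ i, conj (Vb i) = -Va i := by
      intro i
      have h0 := congrArg conj (hVab i)
      rw [Complex.conj_conj, map_neg] at h0
      rw [h0, neg_neg]
    have hcWb : ∀ i, conj (Wb i) = -Wa i := by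
      intro i
      have h0 := congrArg conj (hWab i)
      rw [Complex.conj_conj, map_neg] at h0
      rw [h0, neg_neg]
    have hZc : ∀ i, conj (Z ξ (conj ξ) t i) = -(Z ξ (conj ξ) t i) := by
      intro i
      simp only [hZ]
      simp only [map_mul, map_add, map_sub, map_div₀, map_pow, Complex.conj_I,
        Complex.conj_conj, Complex.conj_ofReal, map_ofNat]
      rw [hVab i, hcVb i, hWab i, hcWb i, hcκ₁, hcκ₂]
      ring
    -- general conjugated-theta lemma specialised to our data
    have hthc : ∀ (u v : Fin g → ℂ) (k : Fin g → ℤ),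
        (∀ i, conj (u i) - (Real.pi : ℂ) * I * (H i i : ℂ)
          = -(v i + B.mulVec (fun j => (L j : ℂ)) i) + 2 * (Real.pi : ℂ) * I * (k i : ℂ)) →
        conj (theta B u)
          = Complex.exp (-(1 / 2) * pairC (B.mulVec (fun j => (L j : ℂ))) (fun j => (L j : ℂ))
              - pairC (fun j => (L j : ℂ)) v) * theta B v := by
      intro u v k hk
      rw [Stmt14Aux.theta_conj hHsymm hBH]
      have he : (fun i => conj (u i) - (Real.pi : ℂ) * I * (H i i : ℂ))
          = (-(v + B.mulVec (fun j => (L j : ℂ))))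
            + (fun i => 2 * (Real.pi : ℂ) * I * ((k i : ℤ) : ℂ)) := by
        funext i
        simp only [Pi.add_apply, Pi.neg_apply]
        rw [hk i]
      rw [he, Stmt14Aux.theta_int_shift, Stmt14Aux.theta_neg, Stmt14Aux.theta_quasi hBsymm]
    have hc0 : conj (theta B (Z ξ (conj ξ) t - d))
        = Complex.exp (-(1 / 2) * pairC (B.mulVec (fun j => (L j : ℂ))) (fun j => (L j : ℂ))
            - pairC (fun j => (L j : ℂ)) (Z ξ (conj ξ) t - d))
          * theta B (Z ξ (conj ξ) t - d) := by
      refine hthc _ _ (-T) fun i => ?_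
      simp only [Pi.sub_apply, Pi.add_apply, Pi.neg_apply, map_sub, Int.cast_neg]
      rw [hZc i, hd i]
      ring
    have hc1 : conj (theta B (Z ξ (conj ξ) t - d + r))
        = Complex.exp (-(1 / 2) * pairC (B.mulVec (fun j => (L j : ℂ))) (fun j => (L j : ℂ))
            - pairC (fun j => (L j : ℂ)) (Z ξ (conj ξ) t - d - r))
          * theta B (Z ξ (conj ξ) t - d - r) := by
      refine hthc _ _ (-(T + N)) fun i => ?_
      simp only [Pi.sub_apply, Pi.add_apply, Pi.neg_apply, map_sub, map_add, Int.cast_neg,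
        Int.cast_add]
      rw [hZc i, hd i, hr i]
      ring
    have hK1' : conj K1ba = K1ab := by rw [← hK1, Complex.conj_conj]
    have hK2' : conj K2ba = K2ab := by rw [← hK2, Complex.conj_conj]
    have hG1c : conj G₁ = G₂ := by rw [hG₁, hG₂, map_mul, hcκ₁, hK1]
    have hG2c : conj G₂ = G₁ := by rw [hG₁, hG₂, map_mul, hcκ₂, hK1']
    have hG3c : conj G₃ = G₃ := by
      rw [hG₃]
      simp only [map_add, map_mul, map_pow, Complex.conj_ofReal, hcκ₁, hcκ₂, hK2, hK2']
      ring
    have hEc : conj (Complex.exp (I * (-(G₁ * ξ) - G₂ * (conj ξ) + G₃ * (t : ℂ) / 2)))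
        = Complex.exp (I * (G₁ * ξ + G₂ * (conj ξ) - G₃ * (t : ℂ) / 2)) := by
      rw [← Complex.exp_conj]
      congr 1
      simp only [map_mul, map_add, map_sub, map_neg, map_div₀, Complex.conj_I,
        Complex.conj_conj, Complex.conj_ofReal, map_ofNat]
      rw [hG1c, hG2c, hG3c]
      ring
    have hAabs_pos : 0 < Aabs := by
      rw [hAabs]
      have h1 : 0 < ‖κ₁‖ := norm_pos_iff.mpr hκ₁
      have h2 : 0 < Real.sqrt |q₂| := Real.sqrt_pos.mpr (abs_pos.mpr hq₂)
      exact mul_pos (mul_pos h1 h2) (Real.exp_pos _)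
    have hA0 : A ≠ 0 := by
      rw [hA]
      exact mul_ne_zero (Complex.ofReal_ne_zero.mpr (ne_of_gt hAabs_pos)) (Complex.exp_ne_zero _)
    have hAcA : A * conj A = ((Aabs ^ 2 : ℝ) : ℂ) := by
      have h1 : conj A = (Aabs : ℂ) * Complex.exp (-(I * (θ : ℂ))) := by
        rw [hA, map_mul, Complex.conj_ofReal, ← Complex.exp_conj, map_mul, Complex.conj_I,
          Complex.conj_ofReal, neg_mul]
      rw [h1, hA, mul_mul_mul_comm, ← Complex.exp_add,
        show I * (θ : ℂ) + -(I * (θ : ℂ)) = 0 from by ring, Complex.exp_zero, mul_one]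
      push_cast
      ring
    have hrim : ∀ i, r i = ((r i).re : ℂ) + (Real.pi : ℂ) * I * ((N i : ℤ) : ℂ) := by
      intro i
      have h2 : r i - conj (r i) = 2 * (Real.pi : ℂ) * I * ((N i : ℤ) : ℂ) := by
        rw [hr i]; ring
      rw [Complex.sub_conj] at h2
      have h4 : ((2 * (r i).im : ℝ) : ℂ) * I = (2 * (Real.pi : ℂ) * ((N i : ℤ) : ℂ)) * I := by
        rw [h2]; ring
      have h5 := mul_right_cancel₀ Complex.I_ne_zero h4
      have h6 : (((r i).im : ℝ) : ℂ) = (Real.pi : ℂ) * ((N i : ℤ) : ℂ) := by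
        push_cast at h5
        linear_combination h5 / 2
      calc r i = ((r i).re : ℂ) + ((r i).im : ℂ) * I := (Complex.re_add_im (r i)).symm
        _ = _ := by rw [h6]; ring
    have hPLr : pairC (fun j => (L j : ℂ)) r
        = ((∑ i, (r i).re * (L i : ℝ) : ℝ) : ℂ)
          + (Real.pi : ℂ) * I * ((∑ i, N i * L i : ℤ) : ℂ) := by
      simp only [pairC]
      push_cast
      rw [Finset.mul_sum, ← Finset.sum_add_distrib]
      refine Finset.sum_congr rfl fun i _ => ?_
      conv_lhs => rw [hrim i]
      push_cast
      ring
    have hreal : (q₂ / |q₂|) * Aabs ^ 2 * Real.exp (∑ i, (r i).re * (L i : ℝ))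
        = Complex.normSq κ₁ * q₂ := by
      rw [hAabs, Complex.normSq_eq_norm_sq, mul_pow, mul_pow]
      have he2 : Real.exp (-(1 / 2) * ∑ i, (r i).re * (L i : ℝ)) ^ 2
          * Real.exp (∑ i, (r i).re * (L i : ℝ)) = 1 := by
        rw [sq, ← Real.exp_add, ← Real.exp_add,
          show -(1 / 2) * (∑ i, (r i).re * (L i : ℝ))
              + -(1 / 2) * (∑ i, (r i).re * (L i : ℝ)) + (∑ i, (r i).re * (L i : ℝ)) = 0
            from by ring, Real.exp_zero]
      calc (q₂ / |q₂|) * (‖κ₁‖ ^ 2 * Real.sqrt |q₂| ^ 2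
              * Real.exp (-(1 / 2) * ∑ i, (r i).re * (L i : ℝ)) ^ 2)
            * Real.exp (∑ i, (r i).re * (L i : ℝ))
          = ‖κ₁‖ ^ 2 * (q₂ * (Real.sqrt |q₂| ^ 2 / |q₂|))
            * (Real.exp (-(1 / 2) * ∑ i, (r i).re * (L i : ℝ)) ^ 2
              * Real.exp (∑ i, (r i).re * (L i : ℝ))) := by ring
        _ = ‖κ₁‖ ^ 2 * q₂ := by
            rw [Real.sq_sqrt (abs_nonneg q₂), div_self (abs_ne_zero.mpr hq₂), he2]
            ring
    have hs : ρ * (A * conj A) * Complex.exp (pairC (fun j => (L j : ℂ)) r)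
        = -(κ₁ * κ₂ * (q₂ : ℂ)) := by
      rw [hρ, hAcA, hPLr, Complex.exp_add, hκ₂, Complex.mul_conj]
      have hcancel : Complex.exp (-((Real.pi : ℂ) * I) * ((∑ i, N i * L i : ℤ) : ℂ))
          * Complex.exp ((Real.pi : ℂ) * I * ((∑ i, N i * L i : ℤ) : ℂ)) = 1 := by
        rw [← Complex.exp_add,
          show -((Real.pi : ℂ) * I) * ((∑ i, N i * L i : ℤ) : ℂ)
              + (Real.pi : ℂ) * I * ((∑ i, N i * L i : ℤ) : ℂ) = 0 from by ring,
          Complex.exp_zero]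
      calc -((q₂ / |q₂| : ℝ) : ℂ) * Complex.exp (-((Real.pi : ℂ) * I) * ((∑ i, N i * L i : ℤ) : ℂ))
            * ((Aabs ^ 2 : ℝ) : ℂ)
            * (Complex.exp ((∑ i, (r i).re * (L i : ℝ) : ℝ) : ℂ)
              * Complex.exp ((Real.pi : ℂ) * I * ((∑ i, N i * L i : ℤ) : ℂ)))
          = -(((q₂ / |q₂| : ℝ) : ℂ) * ((Aabs ^ 2 : ℝ) : ℂ)
              * Complex.exp ((∑ i, (r i).re * (L i : ℝ) : ℝ) : ℂ))
            * (Complex.exp (-((Real.pi : ℂ) * I) * ((∑ i, N i * L i : ℤ) : ℂ))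
              * Complex.exp ((Real.pi : ℂ) * I * ((∑ i, N i * L i : ℤ) : ℂ))) := by ring
        _ = -(((q₂ / |q₂| : ℝ) : ℂ) * ((Aabs ^ 2 : ℝ) : ℂ)
              * Complex.exp ((∑ i, (r i).re * (L i : ℝ) : ℝ) : ℂ)) := by
            rw [hcancel, mul_one]
        _ = -((Complex.normSq κ₁ : ℝ) : ℂ) * (q₂ : ℂ) := by
            rw [← Complex.ofReal_exp, ← Complex.ofReal_mul, ← Complex.ofReal_mul]
            rw [hreal]
            push_cast
            ring
        _ = -((Complex.normSq κ₁ : ℂ) * (q₂ : ℂ)) := by ring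
    have he01 : Complex.exp (-(1 / 2) * pairC (B.mulVec (fun j => (L j : ℂ))) (fun j => (L j : ℂ))
            - pairC (fun j => (L j : ℂ)) (Z ξ (conj ξ) t - d))
          * Complex.exp (pairC (fun j => (L j : ℂ)) r)
        = Complex.exp (-(1 / 2) * pairC (B.mulVec (fun j => (L j : ℂ))) (fun j => (L j : ℂ))
            - pairC (fun j => (L j : ℂ)) (Z ξ (conj ξ) t - d - r)) := by
      rw [← Complex.exp_add]
      congr 1
      conv_rhs => rw [Stmt14Aux.pairC_sub_right]
      ring
    have hkey : -(κ₁ * κ₂ * (q₂ : ℂ) / A)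
        = ρ * conj A
          * Complex.exp (-(1 / 2) * pairC (B.mulVec (fun j => (L j : ℂ))) (fun j => (L j : ℂ))
              - pairC (fun j => (L j : ℂ)) (Z ξ (conj ξ) t - d - r))
          / Complex.exp (-(1 / 2) * pairC (B.mulVec (fun j => (L j : ℂ))) (fun j => (L j : ℂ))
              - pairC (fun j => (L j : ℂ)) (Z ξ (conj ξ) t - d)) := by
      rw [← neg_div, div_eq_div_iff hA0 (Complex.exp_ne_zero _)]
      linear_combination (ρ * conj A * A) * he01
        - Complex.exp (-(1 / 2) * pairC (B.mulVec (fun j => (L j : ℂ))) (fun j => (L j : ℂ))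
            - pairC (fun j => (L j : ℂ)) (Z ξ (conj ξ) t - d)) * hs
    rw [hψs, hψ, map_mul, map_div₀, map_mul, hc0, hc1, hEc, hkey]
    ring
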